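/- Let G(1,1;d0,n−d0−2) with 2 ≤ d0 < n−2 be the bipartite graph with U = {u1, u2}, |V1| = d0, |V2| = n−d0−2, where u1 is adjacent to all of V1 ∪ V2 and u2 is adjacent exactly to V1. Then the number of spanning trees of G(1,1;d0,n−d0−2) equals 2^{d0−1} · d0. -/

import Mathlib

/-- The number of spanning trees of a graph: spanning subgraphs whose coercion is a tree. -/
noncomputable def spanningTreeCount {V : Type*} (G : SimpleGraph V) : ℕ :=
  {H : G.Subgraph | H.IsSpanning ∧ H.coe.IsTree}.ncard

open SimpleGraph


section ParentTree
variable {V : Type*} {G : SimpleGraph V}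

lemma aux_no_cycle (r : V) (P : V → V) (ht : V → ℕ)
    (hdec : ∀ x, x ≠ r → ht (P x) < ht x)
    (hedge : ∀ x y, G.Adj x y → (x = P y ∧ y ≠ r) ∨ (y = P x ∧ x ≠ r))
    (u : V) (c : G.Walk u u) (hc : c.IsCycle)
    (hmax : ∀ x ∈ c.support, ht x ≤ ht u) : False := by
  cases c with
  | nil => exact hc.not_of_nil
  | @cons _ w _ hadj p =>
    rw [Walk.cons_isCycle_iff] at hc
    obtain ⟨hp, he⟩ := hc
    have key : ∀ y, G.Adj u y → y ∈ p.support → y = P u := by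
      intro y hy hyp
      rcases hedge u y hy with ⟨h1, h2⟩ | ⟨h1, h2⟩
      · exfalso
        have := hdec y h2
        rw [← h1] at this
        exact absurd (hmax y (by simp [hyp])) (by omega)
      · exact h1
    have hw : w = P u := key w hadj p.start_mem_support
    cases p with
    | nil => exact hadj.ne rfl
    | cons h' q =>
      obtain ⟨x, q2, h2', heq⟩ := Walk.exists_cons_eq_concat h' q
      have hx : x = P u := by
        apply key x h2'.symm
        rw [heq]
        simp [Walk.support_concat, q2.end_mem_support]
      apply he
      rw [heq, Walk.edges_concat]
      have : s(u, w) = s(x, u) := by rw [hw, hx, Sym2.eq_swap]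
      rw [this]
      simp

lemma isTree_of_parent [Nonempty V] (r : V) (P : V → V) (ht : V → ℕ)
    (hdec : ∀ x, x ≠ r → ht (P x) < ht x)
    (hadjP : ∀ x, x ≠ r → G.Adj x (P x))
    (hedge : ∀ x y, G.Adj x y → (x = P y ∧ y ≠ r) ∨ (y = P x ∧ x ≠ r)) :
    G.IsTree := by
  constructor
  · -- connected
    have hreach : ∀ n (x : V), ht x ≤ n → G.Reachable x r := by
      intro n
      induction n with
      | zero =>
        intro x hx
        by_cases h : x = r
        · exact h ▸ Reachable.refl _
        · exact absurd (hdec x h) (by omega)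
      | succ n ih =>
        intro x hx
        by_cases h : x = r
        · exact h ▸ Reachable.refl _
        · exact (hadjP x h).reachable.trans (ih (P x) (by have := hdec x h; omega))
    exact ⟨fun a b => (hreach _ a le_rfl).trans (hreach _ b le_rfl).symm⟩
  · -- acyclic
    intro v c hc
    classical
    have hne : c.support.toFinset.Nonempty := ⟨v, by simp [Walk.start_mem_support]⟩
    obtain ⟨u, hu, hmaxu⟩ := Finset.exists_max_image c.support.toFinset ht hne
    rw [List.mem_toFinset] at hu
    have hc' := hc.rotate hu
    apply aux_no_cycle r P ht hdec hedge u (c.rotate u hu) hc'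
    intro x hx
    apply hmaxu
    rw [List.mem_toFinset]
    rcases List.eq_or_mem_of_mem_cons ((c.rotate u hu).support_eq_cons ▸ hx) with h | h
    · exact h ▸ hu
    · have := (Walk.support_rotate c u hu).mem_iff.mp h
      exact List.mem_of_mem_tail this

end ParentTree
open SimpleGraph

/-- The double nested graph `G(1,1; a, b)`: `u₁ = Sum.inl 0` is adjacent to all of
`V₁ ∪ V₂`, and `u₂ = Sum.inl 1` is adjacent exactly to `V₁` (the `Fin a` part). -/
def DN2 (a b : ℕ) : SimpleGraph (Fin 2 ⊕ (Fin a ⊕ Fin b)) :=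
  SimpleGraph.fromRel (fun x y =>
    (∃ v : Fin a ⊕ Fin b, x = Sum.inl 0 ∧ y = Sum.inr v) ∨
    (∃ v : Fin a, x = Sum.inl 1 ∧ y = Sum.inr (Sum.inl v)))

section DN2
variable {a b : ℕ}

/-- characterization of DN2 adjacency -/
lemma DN2_adj_iff (x y : Fin 2 ⊕ (Fin a ⊕ Fin b)) :
    (DN2 a b).Adj x y ↔
      ((x = Sum.inl 0 ∧ ∃ t, y = Sum.inr t) ∨ (y = Sum.inl 0 ∧ ∃ t, x = Sum.inr t) ∨
       (x = Sum.inl 1 ∧ ∃ v, y = Sum.inr (Sum.inl v)) ∨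
       (y = Sum.inl 1 ∧ ∃ v, x = Sum.inr (Sum.inl v))) := by
  constructor
  · rintro ⟨hne, (⟨t, rfl, rfl⟩ | ⟨v, rfl, rfl⟩) | (⟨t, rfl, rfl⟩ | ⟨v, rfl, rfl⟩)⟩
    · exact Or.inl ⟨rfl, t, rfl⟩
    · exact Or.inr (Or.inr (Or.inl ⟨rfl, v, rfl⟩))
    · exact Or.inr (Or.inl ⟨rfl, t, rfl⟩)
    · exact Or.inr (Or.inr (Or.inr ⟨rfl, v, rfl⟩))
  · rintro (⟨rfl, t, rfl⟩ | ⟨rfl, t, rfl⟩ | ⟨rfl, v, rfl⟩ | ⟨rfl, v, rfl⟩) <;>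
      refine ⟨by simp, ?_⟩
    · exact Or.inl (Or.inl ⟨t, rfl, rfl⟩)
    · exact Or.inr (Or.inl ⟨t, rfl, rfl⟩)
    · exact Or.inl (Or.inr ⟨v, rfl, rfl⟩)
    · exact Or.inr (Or.inr ⟨v, rfl, rfl⟩)

/-- the candidate spanning-tree subgraph indexed by `(v0, f)` with `f v0 = true` -/
def eRel (a b : ℕ) (v0 : Fin a) (f : Fin a → Bool)
    (x y : Fin 2 ⊕ (Fin a ⊕ Fin b)) : Prop :=
  (x = Sum.inl 0 ∧ ∃ w : Fin b, y = Sum.inr (Sum.inr w)) ∨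
  (∃ v : Fin a, x = Sum.inl 0 ∧ y = Sum.inr (Sum.inl v) ∧ f v = true) ∨
  (∃ v : Fin a, x = Sum.inl 1 ∧ y = Sum.inr (Sum.inl v) ∧ (f v = false ∨ v = v0))

def treeSub (a b : ℕ) (v0 : Fin a) (f : Fin a → Bool) : (DN2 a b).Subgraph where
  verts := Set.univ
  Adj x y := eRel a b v0 f x y ∨ eRel a b v0 f y x
  adj_sub := by
    rintro x y (h | h) <;>
      rcases h with ⟨rfl, w, rfl⟩ | ⟨v, rfl, rfl, -⟩ | ⟨v, rfl, rfl, -⟩ <;>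
      rw [DN2_adj_iff]
    · exact Or.inl ⟨rfl, _, rfl⟩
    · exact Or.inl ⟨rfl, _, rfl⟩
    · exact Or.inr (Or.inr (Or.inl ⟨rfl, v, rfl⟩))
    · exact Or.inr (Or.inl ⟨rfl, _, rfl⟩)
    · exact Or.inr (Or.inl ⟨rfl, _, rfl⟩)
    · exact Or.inr (Or.inr (Or.inr ⟨rfl, v, rfl⟩))
  edge_vert := fun _ => trivial
  symm := ⟨fun x y h => h.symm⟩

lemma treeSub_spanning (v0 : Fin a) (f : Fin a → Bool) :
    (treeSub a b v0 f).IsSpanning := fun _ => trivial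

lemma treeSub_adj (v0 : Fin a) (f : Fin a → Bool) (x y) :
    (treeSub a b v0 f).Adj x y ↔ eRel a b v0 f x y ∨ eRel a b v0 f y x := Iff.rfl

lemma treeSub_adj_u1V2 (v0 : Fin a) (f : Fin a → Bool) (w : Fin b) :
    (treeSub a b v0 f).Adj (Sum.inl 0) (Sum.inr (Sum.inr w)) :=
  Or.inl (Or.inl ⟨rfl, w, rfl⟩)

lemma treeSub_adj_u1V1 (v0 : Fin a) (f : Fin a → Bool) (v : Fin a) :
    (treeSub a b v0 f).Adj (Sum.inl 0) (Sum.inr (Sum.inl v)) ↔ f v = true := by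
  simp [treeSub_adj, eRel]

lemma treeSub_adj_u2V1 (v0 : Fin a) (f : Fin a → Bool) (v : Fin a) :
    (treeSub a b v0 f).Adj (Sum.inl 1) (Sum.inr (Sum.inl v)) ↔ (f v = false ∨ v = v0) := by
  simp [treeSub_adj, eRel]

end DN2

section Tree
variable {a b : ℕ}

/-- parent map -/
def Pval (v0 : Fin a) (f : Fin a → Bool) :
    Fin 2 ⊕ (Fin a ⊕ Fin b) → Fin 2 ⊕ (Fin a ⊕ Fin b)
  | Sum.inl i => if i = 0 then Sum.inl 0 else Sum.inr (Sum.inl v0)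
  | Sum.inr (Sum.inl v) => if f v then Sum.inl 0 else Sum.inl 1
  | Sum.inr (Sum.inr _) => Sum.inl 0

/-- height map -/
def htval (f : Fin a → Bool) : Fin 2 ⊕ (Fin a ⊕ Fin b) → ℕ
  | Sum.inl i => if i = 0 then 0 else 2
  | Sum.inr (Sum.inl v) => if f v then 1 else 3
  | Sum.inr (Sum.inr _) => 1

lemma fin2_cases (i : Fin 2) : i = 0 ∨ i = 1 := by omega

lemma treeSub_isTree (v0 : Fin a) (f : Fin a → Bool) (hf0 : f v0 = true) :
    (treeSub a b v0 f).coe.IsTree := by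
  haveI : Nonempty ↥(treeSub a b v0 f).verts := ⟨⟨Sum.inl 0, trivial⟩⟩
  apply isTree_of_parent (G := (treeSub a b v0 f).coe)
    ⟨Sum.inl 0, trivial⟩
    (fun x => ⟨Pval v0 f x.1, trivial⟩)
    (fun x => htval f x.1)
  · -- hdec
    rintro ⟨x, xm⟩ hx
    have hx' : x ≠ Sum.inl 0 := fun h => hx (Subtype.ext h)
    rcases x with i | (v | w)
    · rcases fin2_cases i with rfl | rfl
      · exact absurd rfl hx'
      · simp [Pval, htval, hf0]
    · by_cases hv : f v = true <;> simp [Pval, htval, hv]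
    · simp [Pval, htval]
  · -- hadjP
    rintro ⟨x, xm⟩ hx
    have hx' : x ≠ Sum.inl 0 := fun h => hx (Subtype.ext h)
    rcases x with i | (v | w)
    · rcases fin2_cases i with rfl | rfl
      · exact absurd rfl hx'
      · show (treeSub a b v0 f).Adj _ _
        simp only [Pval, if_neg (by norm_num : (1 : Fin 2) ≠ 0)]
        exact ((treeSub_adj_u2V1 v0 f v0).mpr (Or.inr rfl))
    · show (treeSub a b v0 f).Adj _ _
      by_cases hv : f v = true
      · simp only [Pval, if_pos hv]
        exact ((treeSub_adj_u1V1 v0 f v).mpr hv).symm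
      · simp only [Pval, if_neg hv]
        exact ((treeSub_adj_u2V1 v0 f v).mpr (Or.inl (by simpa using hv))).symm
    · show (treeSub a b v0 f).Adj _ _
      simp only [Pval]
      exact (treeSub_adj_u1V2 v0 f w).symm
  · -- hedge
    rintro ⟨x, xm⟩ ⟨y, ym⟩ hxy
    have hxy' : (treeSub a b v0 f).Adj x y := hxy
    have base : ∀ x y : Fin 2 ⊕ (Fin a ⊕ Fin b), eRel a b v0 f x y →
        (x = Pval v0 f y ∧ y ≠ Sum.inl 0) ∨ (y = Pval v0 f x ∧ x ≠ Sum.inl 0) := by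
      rintro x y (⟨rfl, w, rfl⟩ | ⟨v, rfl, rfl, hv⟩ | ⟨v, rfl, rfl, hv⟩)
      · exact Or.inl ⟨by simp [Pval], by simp⟩
      · exact Or.inl ⟨by simp [Pval, hv], by simp⟩
      · rcases hv with hv | rfl
        · exact Or.inl ⟨by simp [Pval, hv], by simp⟩
        · exact Or.inr ⟨by simp [Pval], by simp⟩
    have goal : ∀ (xm : x ∈ _) (ym : y ∈ _),
        (x = Pval v0 f y ∧ y ≠ Sum.inl 0) ∨ (y = Pval v0 f x ∧ x ≠ Sum.inl 0) →
        ((⟨x, xm⟩ : ↥(treeSub a b v0 f).verts) = ⟨Pval v0 f y, trivial⟩ ∧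
          (⟨y, ym⟩ : ↥(treeSub a b v0 f).verts) ≠ ⟨Sum.inl 0, trivial⟩) ∨
        ((⟨y, ym⟩ : ↥(treeSub a b v0 f).verts) = ⟨Pval v0 f x, trivial⟩ ∧
          (⟨x, xm⟩ : ↥(treeSub a b v0 f).verts) ≠ ⟨Sum.inl 0, trivial⟩) := by
      rintro xm ym (⟨h1, h2⟩ | ⟨h1, h2⟩)
      · exact Or.inl ⟨Subtype.ext h1, fun hc => h2 (congrArg Subtype.val hc)⟩
      · exact Or.inr ⟨Subtype.ext h1, fun hc => h2 (congrArg Subtype.val hc)⟩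
    rcases hxy' with h | h
    · exact goal xm ym (base x y h)
    · exact goal xm ym ((base y x h).symm)

end Tree

section Surj
variable {a b : ℕ} {H : (DN2 a b).Subgraph}

/-- shapes of edges in any subgraph of DN2 -/
lemma sub_adj_shape (hxy : H.Adj x y) :
    (x = Sum.inl 0 ∧ ∃ t, y = Sum.inr t) ∨ (y = Sum.inl 0 ∧ ∃ t, x = Sum.inr t) ∨
    (x = Sum.inl 1 ∧ ∃ v, y = Sum.inr (Sum.inl v)) ∨
    (y = Sum.inl 1 ∧ ∃ v, x = Sum.inr (Sum.inl v)) :=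
  (DN2_adj_iff x y).mp (hxy.adj_sub)

/-- V2 vertices have u1 as only possible neighbor -/
lemma nbr_V2 {w : Fin b} (hxy : H.Adj (Sum.inr (Sum.inr w)) y) : y = Sum.inl 0 := by
  rcases sub_adj_shape hxy with ⟨h, -⟩ | ⟨h, -⟩ | ⟨h, -⟩ | ⟨-, v, h⟩ <;>
    first | exact h | exact absurd h (by simp) | exact absurd h.symm (by simp)

lemma nbr_V1 {v : Fin a} (hxy : H.Adj (Sum.inr (Sum.inl v)) y) :
    y = Sum.inl 0 ∨ y = Sum.inl 1 := by
  rcases sub_adj_shape hxy with ⟨h, -⟩ | ⟨h, -⟩ | ⟨h, -⟩ | ⟨h, -⟩ <;>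
    first | exact Or.inl h | exact Or.inr h | exact absurd h (by simp)

lemma nbr_u2 {z} (hxy : H.Adj (Sum.inl 1) z) : ∃ v, z = Sum.inr (Sum.inl v) := by
  rcases sub_adj_shape hxy with ⟨h, -⟩ | ⟨-, t, h⟩ | ⟨-, v, h⟩ | ⟨-, v, h⟩
  · exact absurd h (by norm_num [Fin.ext_iff])
  · exact absurd h (by simp)
  · exact ⟨v, h⟩
  · exact absurd h (by simp)

variable (hs : H.IsSpanning) (htr : H.coe.IsTree)
include hs htr

lemma surj_u1V2 (w : Fin b) : H.Adj (Sum.inl 0) (Sum.inr (Sum.inr w)) := by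
  have hr := htr.isConnected.preconnected ⟨Sum.inr (Sum.inr w), hs _⟩ ⟨Sum.inl 0, hs _⟩
  obtain ⟨p⟩ := hr
  cases p with
  | cons hadj p =>
    have h1 : H.Adj (Sum.inr (Sum.inr w)) _ := hadj
    rw [nbr_V2 h1] at h1
    exact h1.symm

lemma surj_V1 (v : Fin a) :
    H.Adj (Sum.inl 0) (Sum.inr (Sum.inl v)) ∨ H.Adj (Sum.inl 1) (Sum.inr (Sum.inl v)) := by
  have hr := htr.isConnected.preconnected ⟨Sum.inr (Sum.inl v), hs _⟩ ⟨Sum.inl 0, hs _⟩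
  obtain ⟨p⟩ := hr
  cases p with
  | cons hadj p =>
    have h1 : H.Adj (Sum.inr (Sum.inl v)) _ := hadj
    rcases nbr_V1 h1 with h | h
    · rw [h] at h1; exact Or.inl h1.symm
    · rw [h] at h1; exact Or.inr h1.symm

/-- existence of the doubly-adjacent vertex -/
lemma surj_exists_v0 : ∃ v : Fin a,
    H.Adj (Sum.inl 0) (Sum.inr (Sum.inl v)) ∧ H.Adj (Sum.inl 1) (Sum.inr (Sum.inl v)) := by
  have hr := htr.isConnected.preconnected ⟨Sum.inl 1, hs _⟩ ⟨Sum.inl 0, hs _⟩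
  obtain ⟨p0⟩ := hr
  obtain ⟨p, hp⟩ := p0.toPath
  cases p with
  | @cons _ z _ hadj q =>
    have h1 : H.Adj (Sum.inl 1) z.1 := hadj
    obtain ⟨v, hv⟩ := nbr_u2 h1
    cases q with
    | nil => exact absurd hv (by simp)
    | @cons _ z2 _ hadj2 q2 =>
      have h2 : H.Adj z.1 z2.1 := hadj2
      rw [hv] at h1 h2
      rcases nbr_V1 h2 with h | h
      · rw [h] at h2
        exact ⟨v, h2.symm, h1⟩
      · exfalso
        have hz2 : z2 = (⟨Sum.inl 1, hs _⟩ : ↥H.verts) := Subtype.ext h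
        have hnd := hp.support_nodup
        rw [Walk.support_cons, Walk.support_cons, List.nodup_cons] at hnd
        exact hnd.1 (by rw [hz2.symm]; simp)

/-- uniqueness of the doubly-adjacent vertex -/
lemma surj_unique_v0 {v v' : Fin a}
    (ha1 : H.Adj (Sum.inl 0) (Sum.inr (Sum.inl v)))
    (ha2 : H.Adj (Sum.inl 1) (Sum.inr (Sum.inl v)))
    (hb1 : H.Adj (Sum.inl 0) (Sum.inr (Sum.inl v')))
    (hb2 : H.Adj (Sum.inl 1) (Sum.inr (Sum.inl v'))) : v = v' := by
  by_contra hne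
  have hone := htr.existsUnique_path ⟨Sum.inl 0, hs _⟩ ⟨Sum.inl 1, hs _⟩
  obtain ⟨q, -, hq⟩ := hone
  let p1 : H.coe.Walk ⟨Sum.inl 0, hs _⟩ ⟨Sum.inl 1, hs _⟩ :=
    Walk.cons (show H.coe.Adj ⟨Sum.inl 0, hs _⟩ ⟨Sum.inr (Sum.inl v), hs _⟩ from ha1)
      (Walk.cons (show H.coe.Adj ⟨Sum.inr (Sum.inl v), hs _⟩ ⟨Sum.inl 1, hs _⟩ from ha2.symm) Walk.nil)
  let p2 : H.coe.Walk ⟨Sum.inl 0, hs _⟩ ⟨Sum.inl 1, hs _⟩ :=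
    Walk.cons (show H.coe.Adj ⟨Sum.inl 0, hs _⟩ ⟨Sum.inr (Sum.inl v'), hs _⟩ from hb1)
      (Walk.cons (show H.coe.Adj ⟨Sum.inr (Sum.inl v'), hs _⟩ ⟨Sum.inl 1, hs _⟩ from hb2.symm) Walk.nil)
  have hp1 : p1.IsPath := by
    simp [p1, Walk.cons_isPath_iff, Subtype.ext_iff]
  have hp2 : p2.IsPath := by
    simp [p2, Walk.cons_isPath_iff, Subtype.ext_iff]
  have he : p1 = p2 := (hq p1 hp1).trans (hq p2 hp2).symm
  have := congrArg Walk.support he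
  simp only [p1, p2, Walk.support_cons, Walk.support_nil, List.cons.injEq] at this
  exact hne (by simpa [Subtype.ext_iff] using this.2.1)

/-- full characterization of spanning trees -/
lemma surj_char : ∃ (v0 : Fin a) (f : Fin a → Bool),
    f v0 = true ∧ H = treeSub a b v0 f := by
  classical
  obtain ⟨v0, hv01, hv02⟩ := surj_exists_v0 hs htr
  set f : Fin a → Bool :=
    fun v => if H.Adj (Sum.inl 0) (Sum.inr (Sum.inl v)) then true else false with hf
  have hfiff : ∀ v, f v = true ↔ H.Adj (Sum.inl 0) (Sum.inr (Sum.inl v)) := by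
    intro v; simp [hf]
  have hffalse : ∀ v, f v = false ↔ ¬ H.Adj (Sum.inl 0) (Sum.inr (Sum.inl v)) := by
    intro v; simp [hf]
  refine ⟨v0, f, (hfiff v0).mpr hv01, ?_⟩
  have base : ∀ x y, H.Adj x y → (treeSub a b v0 f).Adj x y := by
    have main : ∀ x y, H.Adj x y →
        ((x = Sum.inl 0 ∧ ∃ t, y = Sum.inr t) ∨ (x = Sum.inl 1 ∧ ∃ v, y = Sum.inr (Sum.inl v)))
        → (treeSub a b v0 f).Adj x y := by
      rintro x y hxy (⟨rfl, (v | w), rfl⟩ | ⟨rfl, v, rfl⟩)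
      · exact (treeSub_adj_u1V1 v0 f v).mpr ((hfiff v).mpr hxy)
      · exact treeSub_adj_u1V2 v0 f w
      · refine (treeSub_adj_u2V1 v0 f v).mpr ?_
        by_cases hadj : H.Adj (Sum.inl 0) (Sum.inr (Sum.inl v))
        · exact Or.inr (surj_unique_v0 hs htr hadj hxy hv01 hv02)
        · exact Or.inl ((hffalse v).mpr hadj)
    intro x y hxy
    rcases sub_adj_shape hxy with ⟨h1, t, h2⟩ | ⟨h1, t, h2⟩ | ⟨h1, v, h2⟩ | ⟨h1, v, h2⟩
    · exact main x y hxy (Or.inl ⟨h1, t, h2⟩)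
    · exact (main y x hxy.symm (Or.inl ⟨h1, t, h2⟩)).symm
    · exact main x y hxy (Or.inr ⟨h1, v, h2⟩)
    · exact (main y x hxy.symm (Or.inr ⟨h1, v, h2⟩)).symm
  have back : ∀ x y, eRel a b v0 f x y → H.Adj x y := by
    rintro x y (⟨rfl, w, rfl⟩ | ⟨v, rfl, rfl, hv⟩ | ⟨v, rfl, rfl, hv⟩)
    · exact surj_u1V2 hs htr w
    · exact (hfiff v).mp hv
    · rcases hv with hv | rfl
      · rcases surj_V1 hs htr v with h | h
        · exact absurd h ((hffalse v).mp hv)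
        · exact h
      · exact hv02
  apply SimpleGraph.Subgraph.ext
  · exact (Set.eq_univ_of_forall hs)
  · funext x y
    apply propext
    constructor
    · exact base x y
    · rintro (h | h)
      · exact back x y h
      · exact (back y x h).symm

end Surj

section Count
variable {a b : ℕ}

lemma treeSub_inj {v0 v0' : Fin a} {f f' : Fin a → Bool}
    (h0 : f v0 = true) (h0' : f' v0' = true)
    (h : treeSub a b v0 f = treeSub a b v0' f') : v0 = v0' ∧ f = f' := by
  have hAdj : ∀ x y, (treeSub a b v0 f).Adj x y ↔ (treeSub a b v0' f').Adj x y := by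
    intro x y; rw [h]
  have hff : f = f' := by
    funext v
    have := (hAdj (Sum.inl 0) (Sum.inr (Sum.inl v)))
    rw [treeSub_adj_u1V1, treeSub_adj_u1V1] at this
    rcases hb : f v with _ | _ <;> rcases hb' : f' v with _ | _ <;> simp_all
  refine ⟨?_, hff⟩
  have := (hAdj (Sum.inl 1) (Sum.inr (Sum.inl v0))).mp
    ((treeSub_adj_u2V1 v0 f v0).mpr (Or.inr rfl))
  rw [treeSub_adj_u2V1] at this
  rcases this with hc | hc
  · rw [← hff] at hc; simp [h0] at hc
  · exact hc

def idxEquiv (v0 : Fin a) : {f : Fin a → Bool // f v0 = true} ≃ ({v : Fin a // v ≠ v0} → Bool) where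
  toFun f v := f.1 v.1
  invFun g := ⟨fun v => if h : v = v0 then true else g ⟨v, h⟩, by simp⟩
  left_inv f := by
    ext v
    by_cases h : v = v0
    · subst h; simp [f.2]
    · simp [h]
  right_inv g := by
    funext v
    simp [v.2]

lemma card_T (a : ℕ) :
    Fintype.card {p : Fin a × (Fin a → Bool) // p.2 p.1 = true} = a * 2 ^ (a - 1) := by
  rw [Fintype.card_congr (Equiv.subtypeProdEquivSigmaSubtype (fun v0 (f : Fin a → Bool) => f v0 = true)),
    Fintype.card_sigma]
  have hv : ∀ v0 : Fin a, Fintype.card {f : Fin a → Bool // f v0 = true} = 2 ^ (a - 1) := by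
    intro v0
    rw [Fintype.card_congr (idxEquiv v0), Fintype.card_fun, Fintype.card_bool]
    congr 1
    have h1 := Fintype.card_subtype_compl (fun v : Fin a => v = v0)
    rw [Fintype.card_subtype_eq, Fintype.card_fin] at h1
    exact h1
  rw [Finset.sum_congr rfl (fun v0 _ => hv v0), Finset.sum_const, Finset.card_univ,
    Fintype.card_fin, smul_eq_mul]

lemma count_DN2 (a b : ℕ) :
    ({H : (DN2 a b).Subgraph | H.IsSpanning ∧ H.coe.IsTree}).ncard = 2 ^ (a - 1) * a := by
  rw [← Nat.card_coe_set_eq]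
  let Φ : {p : Fin a × (Fin a → Bool) // p.2 p.1 = true} →
      ↥{H : (DN2 a b).Subgraph | H.IsSpanning ∧ H.coe.IsTree} :=
    fun p => ⟨treeSub a b p.1.1 p.1.2, treeSub_spanning _ _, treeSub_isTree _ _ p.2⟩
  have hΦ : Function.Bijective Φ := by
    constructor
    · rintro ⟨⟨v0, f⟩, h0⟩ ⟨⟨v0', f'⟩, h0'⟩ hpq
      have heq : treeSub a b v0 f = treeSub a b v0' f' := congrArg Subtype.val hpq
      obtain ⟨h1, h2⟩ := treeSub_inj h0 h0' heq
      exact Subtype.ext (Prod.ext h1 h2)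
    · rintro ⟨H, hs, htr⟩
      obtain ⟨v0, f, hf, rfl⟩ := surj_char hs htr
      exact ⟨⟨(v0, f), hf⟩, rfl⟩
  rw [← Nat.card_eq_of_bijective Φ hΦ, Nat.card_eq_fintype_card, card_T, Nat.mul_comm]

end Count


/-- The quasi-tree graph `G(1,1; d₀, n-d₀-2)` with `2 ≤ d₀ < n-2` has exactly
`2^(d₀-1) * d₀` spanning trees. -/
theorem spanningTreeCount_DN2_quasiTree (n d0 : ℕ) (h1 : 2 ≤ d0) (h2 : d0 < n - 2) :
    spanningTreeCount (DN2 d0 (n - d0 - 2)) = 2 ^ (d0 - 1) * d0 :=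
  count_DN2 d0 (n - d0 - 2)
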